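/- Let (X,w) be a quasi-pseudometric modular space, and let a_w(x,y)(t) = w(t,x,y) be the corresponding ∇-category structure. Then the topology T(w) generated by the modular entourages W_{t,ε}(x) = {y : w(t,x,y) < ε} coincides with the Flagg open-ball topology T(a_w), which has as base the balls B(x,g) = {y : g ◁ a_w(x,y)} for g ∈ ∇ with g ◁ 𝟎. -/

import Mathlib

open scoped ENNReal

/-- The positive reals `(0,∞)`. -/
abbrev Rpos : Type := {t : ℝ // 0 < t}

/-- `∇`: the isotone functions `(0,∞) → [0,∞]ᵒᵖ`, i.e. non-increasing
`[0,∞]`-valued functions on `(0,∞)`, with the opposite pointwise order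
(so the constant `0` function is the top element). -/
abbrev Nabla : Type := Rpos →o ℝ≥0∞ᵒᵈ

/-- `a` is well-below `b`. -/
def wellBelow {L : Type*} [CompleteLattice L] (a b : L) : Prop :=
  ∀ S : Set L, b ≤ sSup S → ∃ s ∈ S, a ≤ s

/-- The quantale operation `(f ⊕ g)(t) = inf_{r+s=t} (f(r)+g(s))`. -/
noncomputable def oplus (f g : Nabla) : Nabla where
  toFun t := OrderDual.toDual (⨅ (r : Rpos) (s : Rpos) (_ : r.1 + s.1 = t.1),
    (OrderDual.ofDual (f r) + OrderDual.ofDual (g s)))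
  monotone' := by
    intro a b hab
    rw [OrderDual.toDual_le_toDual]
    refine le_iInf fun r => le_iInf fun s => le_iInf fun hrs => ?_
    have hδ : (0:ℝ) ≤ b.1 - a.1 := sub_nonneg.2 hab
    have hs' : (0:ℝ) < s.1 + (b.1 - a.1) := add_pos_of_pos_of_nonneg s.2 hδ
    have h1 : (⨅ (r' : Rpos) (s' : Rpos) (_ : r'.1 + s'.1 = b.1),
        (OrderDual.ofDual (f r') + OrderDual.ofDual (g s'))) ≤
        OrderDual.ofDual (f r) + OrderDual.ofDual (g ⟨s.1 + (b.1 - a.1), hs'⟩) := by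
      refine iInf_le_of_le r (iInf_le_of_le ⟨s.1 + (b.1 - a.1), hs'⟩
        (iInf_le_of_le ?_ le_rfl))
      simp only
      linarith [hrs]
    refine h1.trans (add_le_add le_rfl ?_)
    exact OrderDual.ofDual_le_ofDual.2 (g.monotone (show s.1 ≤ s.1 + (b.1 - a.1) by linarith))

/-- A set is open for the topology associated to a quasi-pseudometric modular `w`
iff every point has a basic modular neighborhood `W_{t,ε}(x)` inside it. -/
def modOpen {X : Type*} (w : ℝ → X → X → ℝ≥0∞) (G : Set X) : Prop :=
  ∀ x ∈ G, ∃ t ε : ℝ, 0 < t ∧ 0 < ε ∧ {y : X | w t x y < ENNReal.ofReal ε} ⊆ G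

/-- Step function `f_{t,ε}`: equals `⊤` (i.e. `∞`) on `(0,t)` and `ε` on `[t,∞)`. -/
noncomputable def stepFn (t : Rpos) (ε : ℝ≥0∞) : Nabla where
  toFun r := OrderDual.toDual (if r.1 < t.1 then ⊤ else ε)
  monotone' := by
    intro r r' hrr'
    rw [OrderDual.toDual_le_toDual]
    split_ifs with h1 h2 h3
    · exact le_rfl
    · exact absurd (lt_of_le_of_lt hrr' h1) h2
    · exact le_top
    · exact le_rfl

lemma ofDual_sSup_apply (S : Set Nabla) (p : Rpos) :
    OrderDual.ofDual (sSup S p) = ⨅ f ∈ S, OrderDual.ofDual (f p) := rfl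

/-- The step functions are well below `⊤`. -/
lemma stepFn_wellBelow (t : Rpos) (ε : ℝ≥0∞) (hε : 0 < ε) :
    wellBelow (stepFn t ε) (⊤ : Nabla) := by
  intro S hS
  have hpt : (⨅ f ∈ S, OrderDual.ofDual (f t)) ≤ (0 : ℝ≥0∞) := hS t
  have hlt : (⨅ f ∈ S, OrderDual.ofDual (f t)) < ε := lt_of_le_of_lt hpt hε
  obtain ⟨f, hfS, hf⟩ : ∃ f ∈ S, OrderDual.ofDual (f t) < ε := by
    by_contra hcon
    push_neg at hcon
    exact absurd (le_iInf₂ fun f hf => hcon f hf) (not_le.2 hlt)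
  refine ⟨f, hfS, fun r => ?_⟩
  show OrderDual.ofDual (f r) ≤ (if r.1 < t.1 then ⊤ else ε)
  by_cases hr : r.1 < t.1
  · rw [if_pos hr]; exact le_top
  · have htr : t ≤ r := le_of_not_gt hr
    have hmono : OrderDual.ofDual (f r) ≤ OrderDual.ofDual (f t) := f.monotone htr
    rw [if_neg hr]
    exact hmono.trans hf.le

/-- If `y` is "close to `x`" in the modular sense, then `stepFn t ε` is well below `a x y`. -/
lemma wellBelow_of_lt {X : Type*} (w : ℝ → X → X → ℝ≥0∞) (a : X → X → Nabla)
    (ha : ∀ (t : Rpos) (x y : X), OrderDual.ofDual (a x y t) = w t.1 x y)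
    (t : Rpos) (ε : ℝ≥0∞) (x y : X) (hxy : w t.1 x y < ε) :
    wellBelow (stepFn t ε) (a x y) := by
  intro S hS
  have hpt : (⨅ f ∈ S, OrderDual.ofDual (f t)) ≤ OrderDual.ofDual (a x y t) := hS t
  rw [ha] at hpt
  have hlt : (⨅ f ∈ S, OrderDual.ofDual (f t)) < ε := lt_of_le_of_lt hpt hxy
  obtain ⟨f, hfS, hf⟩ : ∃ f ∈ S, OrderDual.ofDual (f t) < ε := by
    by_contra hcon
    push_neg at hcon
    exact absurd (le_iInf₂ fun f hf => hcon f hf) (not_le.2 hlt)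
  refine ⟨f, hfS, fun r => ?_⟩
  show OrderDual.ofDual (f r) ≤ (if r.1 < t.1 then ⊤ else ε)
  by_cases hr : r.1 < t.1
  · rw [if_pos hr]; exact le_top
  · have htr : t ≤ r := le_of_not_gt hr
    have hmono : OrderDual.ofDual (f r) ≤ OrderDual.ofDual (f t) := f.monotone htr
    rw [if_neg hr]
    exact hmono.trans hf.le

/-- Every `g ◁ ⊤` lies below some step function (in the nabla order). -/
lemma exists_stepFn_of_wellBelow (g : Nabla) (hg : wellBelow g (⊤ : Nabla)) :
    ∃ (t : Rpos) (ε : ℝ≥0∞), 0 < ε ∧ ε ≠ ⊤ ∧ g ≤ stepFn t ε := by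
  set S : Set Nabla := {f | ∃ (t : Rpos) (ε : ℝ≥0∞), 0 < ε ∧ ε ≠ ⊤ ∧ f = stepFn t ε} with hSdef
  have hS : (⊤ : Nabla) ≤ sSup S := by
    intro p
    show (⨅ f ∈ S, OrderDual.ofDual (f p)) ≤ (0 : ℝ≥0∞)
    have : (⨅ f ∈ S, OrderDual.ofDual (f p)) = 0 := by
      refine le_antisymm ?_ zero_le
      refine ENNReal.le_of_forall_pos_le_add fun ε hε _ => ?_
      rw [zero_add]
      calc (⨅ f ∈ S, OrderDual.ofDual (f p))
          ≤ OrderDual.ofDual (stepFn p ε p) :=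
            iInf₂_le_of_le (stepFn p ε)
              ⟨p, ε, ENNReal.coe_pos.2 hε, ENNReal.coe_ne_top, rfl⟩ le_rfl
        _ = ε := by simp [stepFn]
    exact this.le
  obtain ⟨f, hfS, hgf⟩ := hg S hS
  obtain ⟨t, ε, hε, hεtop, rfl⟩ := hfS
  exact ⟨t, ε, hε, hεtop, hgf⟩

/-- for a quasi-pseudometric modular space `(X,w)` with associated
`∇`-category structure `a_w(x,y)(t) = w(t,x,y)`, the topology `T(w)` generated by
the modular entourages coincides with the Flagg open-ball topology of `a_w`,
whose basic ball at `x` of radius `g ◁ 𝟎 = ⊤` is `B(x,g) = {y : g ◁ a_w(x,y)}`. -/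
theorem stmt_19 {X : Type*} (w : ℝ → X → X → ℝ≥0∞)
    (hM1 : ∀ t : ℝ, 0 < t → ∀ x : X, w t x x = 0)
    (hM2 : ∀ (x y z : X) (t s : ℝ), 0 < t → 0 < s →
      w (t + s) x y ≤ w t x z + w s z y)
    (a : X → X → Nabla)
    (ha : ∀ (t : Rpos) (x y : X), OrderDual.ofDual (a x y t) = w t.1 x y) :
    ∀ G : Set X,
      modOpen w G ↔
        ∀ x ∈ G, ∃ g : Nabla, wellBelow g (⊤ : Nabla) ∧
          {y : X | wellBelow g (a x y)} ⊆ G := by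
  intro G
  constructor
  · -- modOpen → Flagg open
    intro hG x hx
    obtain ⟨t, ε, ht, hε, hW⟩ := hG x hx
    set tp : Rpos := ⟨t, ht⟩
    have hε0 : ENNReal.ofReal ε ≠ 0 := (ENNReal.ofReal_pos.2 hε).ne'
    refine ⟨stepFn tp (ENNReal.ofReal ε / 2),
      stepFn_wellBelow _ _ (ENNReal.half_pos hε0), fun y hy => ?_⟩
    have hle : stepFn tp (ENNReal.ofReal ε / 2) ≤ a x y := by
      obtain ⟨s, hs, hgs⟩ := hy {a x y} (le_sSup (Set.mem_singleton _))
      rwa [Set.mem_singleton_iff.1 hs] at hgs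
    apply hW
    have h1 : OrderDual.ofDual (a x y tp) ≤
        OrderDual.ofDual (stepFn tp (ENNReal.ofReal ε / 2) tp) :=
      OrderDual.ofDual_le_ofDual.2 (hle tp)
    have h2 : OrderDual.ofDual (stepFn tp (ENNReal.ofReal ε / 2) tp) =
        ENNReal.ofReal ε / 2 := by simp [stepFn]
    have h3 : w t x y ≤ ENNReal.ofReal ε / 2 := by
      rw [← ha tp x y]; rw [h2] at h1; exact h1
    exact lt_of_le_of_lt h3 (ENNReal.half_lt_self hε0 ENNReal.ofReal_ne_top)
  · -- Flagg open → modOpen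
    intro hB x hx
    obtain ⟨g, hg, hball⟩ := hB x hx
    obtain ⟨t, ε, hε, hεtop, hgle⟩ := exists_stepFn_of_wellBelow g hg
    refine ⟨t.1, ε.toReal, t.2, ENNReal.toReal_pos hε.ne' hεtop, fun y hy => ?_⟩
    apply hball
    have hy' : w t.1 x y < ε := by
      rwa [ENNReal.ofReal_toReal hεtop] at hy
    have hwb := wellBelow_of_lt w a ha t ε x y hy'
    exact fun S hS => by
      obtain ⟨s, hs, h⟩ := hwb S hS
      exact ⟨s, hs, hgle.trans h⟩
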